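/- If G is the generator matrix of an [n,k,t] functional batch code over 𝔽₂, then (t+1)^n ≥ (2^k − 1)^t. -/
import Mathlib


/-- `G` is the generator matrix of an `[n,k,t]` functional batch code over `𝔽₂`:
for every `t`-tuple of nonzero vectors `α₁,…,α_t` in `𝔽₂^k` there exist pairwise
disjoint subsets `R₁,…,R_t` of the column index set such that each `α_ℓ` lies in the
`𝔽₂`-linear span of the columns of `G` indexed by `R_ℓ`. -/
def IsFunctionalBatchCode (k n t : ℕ) (G : Matrix (Fin k) (Fin n) (ZMod 2)) : Prop :=
  ∀ α : Fin t → Fin k → ZMod 2, (∀ ℓ, α ℓ ≠ 0) →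
    ∃ R : Fin t → Finset (Fin n),
      (∀ ℓ₁ ℓ₂ : Fin t, ℓ₁ ≠ ℓ₂ → Disjoint (R ℓ₁) (R ℓ₂)) ∧
      ∀ ℓ : Fin t,
        α ℓ ∈ Submodule.span (ZMod 2) ((fun j i => G i j) '' (R ℓ : Set (Fin n)))

/-- If `G` generates an `[n,k,t]` functional batch code over `𝔽₂`, then
`(t+1)^n ≥ (2^k − 1)^t`. -/
theorem functional_batch_code_length_bound (k n t : ℕ)
    (G : Matrix (Fin k) (Fin n) (ZMod 2))
    (hG : IsFunctionalBatchCode k n t G) :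
    (t + 1) ^ n ≥ (2 ^ k - 1) ^ t := by
  classical
  set col : Fin n → Fin k → ZMod 2 := fun j i => G i j with hcol
  -- key: every tuple of nonzero vectors is represented by disjoint sum-sets
  have key : ∀ β : Fin t → {v : Fin k → ZMod 2 // v ≠ 0},
      ∃ T : Fin t → Finset (Fin n),
        (∀ ℓ₁ ℓ₂ : Fin t, ℓ₁ ≠ ℓ₂ → Disjoint (T ℓ₁) (T ℓ₂)) ∧
        ∀ ℓ, (β ℓ : Fin k → ZMod 2) = ∑ j ∈ T ℓ, col j := by
    intro β
    obtain ⟨R, hdis, hspan⟩ := hG (fun ℓ => (β ℓ : Fin k → ZMod 2)) (fun ℓ => (β ℓ).2)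
    have hz : ∀ a : ZMod 2, a ≠ 0 → a = 1 := by decide
    have hrep : ∀ ℓ, ∃ T : Finset (Fin n), T ⊆ R ℓ ∧
        (β ℓ : Fin k → ZMod 2) = ∑ j ∈ T, col j := by
      intro ℓ
      obtain ⟨l, hl, hsum⟩ :=
        (Finsupp.mem_span_image_iff_linearCombination (ZMod 2)
          (v := col) (s := (R ℓ : Set (Fin n)))).1 (hspan ℓ)
      refine ⟨l.support, ?_, ?_⟩
      · intro j hj
        simpa using (Finsupp.mem_supported (ZMod 2) l).1 hl hj
      · rw [← hsum, Finsupp.linearCombination_apply, Finsupp.sum]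
        refine Finset.sum_congr rfl fun j hj => ?_
        rw [hz (l j) (Finsupp.mem_support_iff.1 hj), one_smul]
    choose T hTsub hTsum using hrep
    exact ⟨T, fun ℓ₁ ℓ₂ h => ((hdis ℓ₁ ℓ₂ h).mono (hTsub ℓ₁) (hTsub ℓ₂)), hTsum⟩
  choose T hTdis hTsum using key
  -- the encoding map
  let F : (Fin t → {v : Fin k → ZMod 2 // v ≠ 0}) → (Fin n → Fin (t + 1)) :=
    fun β j => if h : ∃ ℓ, j ∈ T β ℓ then (h.choose).castSucc else Fin.last t
  have hfilter : ∀ β ℓ, T β ℓ = Finset.univ.filter (fun j => F β j = ℓ.castSucc) := by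
    intro β ℓ
    ext j
    simp only [Finset.mem_filter, Finset.mem_univ, true_and, F]
    constructor
    · intro hj
      have h : ∃ ℓ, j ∈ T β ℓ := ⟨ℓ, hj⟩
      rw [dif_pos h]
      have : h.choose = ℓ := by
        by_contra hne
        exact (Finset.disjoint_left.1 (hTdis β h.choose ℓ hne) h.choose_spec) hj
      rw [this]
    · intro hj
      by_cases h : ∃ ℓ, j ∈ T β ℓ
      · rw [dif_pos h] at hj
        have : h.choose = ℓ := Fin.castSucc_inj.1 hj
        exact this ▸ h.choose_spec
      · rw [dif_neg h] at hj
        exact absurd hj (Fin.ne_last_of_lt (Fin.castSucc_lt_last ℓ)).symm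
  have hFinj : Function.Injective F := by
    intro β₁ β₂ hF
    funext ℓ
    apply Subtype.ext
    rw [hTsum β₁ ℓ, hTsum β₂ ℓ, hfilter β₁ ℓ, hfilter β₂ ℓ, hF]
  have hcard := Fintype.card_le_of_injective F hFinj
  have h1 : Fintype.card (Fin t → {v : Fin k → ZMod 2 // v ≠ 0}) = (2 ^ k - 1) ^ t := by
    rw [Fintype.card_fun]
    congr 1
    · rw [Fintype.card_subtype_compl (p := fun v : Fin k → ZMod 2 => v = 0)]
      simp [Fintype.card_fun]
    · simp
  have h2 : Fintype.card (Fin n → Fin (t + 1)) = (t + 1) ^ n := by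
    simp [Fintype.card_fun]
  rw [h1, h2] at hcard
  exact hcard
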